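/- Let X be a Weibull random variable with shape α > 0 and scale β > 0 and density f(x;α,β). Fix real s and r with r > 0, and set ζ = s + (r-1)(α-1). If ζ > -α, then E[X^s log²(X) f^{r-1}(X;α,β)] = (2 β^{s-r+1} α^{r-2} / r^{1+ζ/α}) Γ(1 + ζ/α) log(β / r^{1/α}) ψ(1 + ζ/α) + (β^{s-r+1} α^{r-1} / r^{1+ζ/α}) Γ(1 + ζ/α) { log²(β / r^{1/α}) + (1/α²)[ ψ(1 + ζ/α)² + ψ'(1 + ζ/α) ] }, where ψ is the digamma function and ψ' its derivative (the trigamma function). -/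

import Mathlib

open Filter Topology Real MeasureTheory

/-- The Weibull probability density function with shape `α` and scale `β`. -/
noncomputable def weibullPDF (α β x : ℝ) : ℝ :=
  (α / β) * (x / β) ^ (α - 1) * Real.exp (-(x / β) ^ α)

/-- The digamma function `ψ(z) = d/dz log Γ(z) = Γ'(z)/Γ(z)`. -/
noncomputable def digamma (z : ℝ) : ℝ :=
  deriv (fun t => Real.log (Real.Gamma t)) z

/-- The trigamma function `ψ'(z)`, the derivative of the digamma function. -/
noncomputable def trigamma (z : ℝ) : ℝ :=
  deriv digamma z

open Set

namespace WeibullAux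

noncomputable def fexp : ℝ → ℂ := fun t => ((Real.exp (-t) : ℝ) : ℂ)
noncomputable def f1 : ℝ → ℂ := fun t => Real.log t • fexp t
noncomputable def f2 : ℝ → ℂ := fun t => Real.log t • f1 t

lemma fexp_top (a : ℝ) : fexp =O[atTop] (· ^ (-a)) := by
  rw [← Asymptotics.isBigO_norm_left]
  simp_rw [fexp, Complex.norm_real,
    Asymptotics.isBigO_norm_left]
  simpa only [neg_one_mul] using (isLittleO_exp_neg_mul_rpow_atTop zero_lt_one _).isBigO

lemma fexp_bot : fexp =O[𝓝[>] (0:ℝ)] (· ^ (-(0:ℝ))) := by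
  simp_rw [neg_zero, rpow_zero]
  refine Asymptotics.isBigO_const_of_tendsto (?_ : Tendsto _ _ (𝓝 (1 : ℂ))) one_ne_zero
  rw [(by simp : (1 : ℂ) = ((Real.exp (-0) : ℝ) : ℂ))]
  exact ((Complex.continuous_ofReal.comp
    (Real.continuous_exp.comp continuous_neg)).continuousAt).continuousWithinAt

lemma f1_cont : LocallyIntegrableOn f1 (Ioi (0:ℝ)) := by
  refine ((ContinuousOn.smul (s := Ioi (0:ℝ)) (f := fun t : ℝ => Real.log t) (g := fexp) ?_ ?_ :
    ContinuousOn f1 (Ioi 0))).locallyIntegrableOn measurableSet_Ioi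
  · exact Real.continuousOn_log.mono fun t ht => ne_of_gt ht
  · exact (Complex.continuous_ofReal.comp
      (Real.continuous_exp.comp continuous_neg)).continuousOn

lemma f1_top {x : ℝ} : f1 =O[atTop] (· ^ (-(x+1))) :=
  isBigO_rpow_top_log_smul (by linarith : x + 1 < x + 2) (fexp_top (x+2))

lemma f1_bot {x : ℝ} (hx : 0 < x) : f1 =O[𝓝[>] (0:ℝ)] (· ^ (-(x/2))) :=
  isBigO_rpow_zero_log_smul (by linarith : (0:ℝ) < x/2) fexp_bot

lemma mellin_f1 {x : ℝ} (hx : 0 < x) :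
    MellinConvergent f1 (x : ℂ) :=
  mellinConvergent_of_isBigO_rpow f1_cont f1_top
    (by rw [Complex.ofReal_re]; linarith) (f1_bot hx) (by rw [Complex.ofReal_re]; linarith)

lemma mellin_f1_hasDeriv {x : ℝ} (hx : 0 < x) :
    MellinConvergent f2 (x : ℂ) ∧
      HasDerivAt (mellin f1) (mellin f2 (x : ℂ)) (x : ℂ) :=
  mellin_hasDerivAt_of_isBigO_rpow f1_cont f1_top
    (by rw [Complex.ofReal_re]; linarith) (f1_bot hx) (by rw [Complex.ofReal_re]; linarith)

lemma mellin_ofReal (g : ℝ → ℝ) (y : ℝ) :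
    mellin (fun t => ((g t : ℝ) : ℂ)) (y : ℂ)
      = ((∫ t in Ioi (0:ℝ), t ^ (y - 1) * g t : ℝ) : ℂ) := by
  rw [mellin]
  refine (setIntegral_congr_fun measurableSet_Ioi fun t ht => ?_).trans integral_ofReal
  rw [smul_eq_mul, show ((y:ℂ) - 1) = ((y - 1 : ℝ) : ℂ) by push_cast; ring,
    ← Complex.ofReal_cpow (le_of_lt ht)]
  norm_cast

lemma f1_eq : f1 = fun t => ((Real.log t * Real.exp (-t) : ℝ) : ℂ) := by
  funext t; simp [f1, fexp, Complex.real_smul]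

lemma f2_eq : f2 = fun t => ((Real.log t ^ 2 * Real.exp (-t) : ℝ) : ℂ) := by
  funext t; simp [f2, f1, fexp, Complex.real_smul]; ring

lemma mellin_f1_eq (y : ℝ) :
    mellin f1 (y : ℂ)
      = ((∫ t in Ioi (0:ℝ), t ^ (y - 1) * (Real.log t * Real.exp (-t)) : ℝ) : ℂ) := by
  rw [f1_eq, mellin_ofReal]

lemma mellin_f2_eq (y : ℝ) :
    mellin f2 (y : ℂ)
      = ((∫ t in Ioi (0:ℝ), t ^ (y - 1) * (Real.log t ^ 2 * Real.exp (-t)) : ℝ) : ℂ) := by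
  rw [f2_eq, mellin_ofReal]

lemma hasDerivAt_Gamma_real {x : ℝ} (hx : 0 < x) :
    HasDerivAt Real.Gamma
      (∫ t in Ioi (0:ℝ), t ^ (x - 1) * (Real.log t * Real.exp (-t))) x := by
  have h := Complex.hasDerivAt_GammaIntegral (s := (x : ℂ)) (by rwa [Complex.ofReal_re])
  have hD : (∫ t : ℝ in Ioi 0, (t:ℂ) ^ ((x:ℂ) - 1) * (Real.log t * Real.exp (-t)))
      = mellin f1 (x : ℂ) := by
    rw [mellin]
    refine setIntegral_congr_fun measurableSet_Ioi fun t ht => ?_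
    simp [f1, fexp, Complex.real_smul, smul_eq_mul]
  rw [hD] at h
  have h2 := h.real_of_complex
  rw [mellin_f1_eq, Complex.ofReal_re] at h2
  refine h2.congr_of_eventuallyEq ?_
  filter_upwards [Ioi_mem_nhds hx] with y hy
  rw [← Complex.Gamma_eq_integral (by rwa [Complex.ofReal_re] : 0 < (y:ℂ).re),
    Complex.Gamma_ofReal, Complex.ofReal_re]

lemma hasDerivAt_deriv_Gamma_real {x : ℝ} (hx : 0 < x) :
    HasDerivAt (deriv Real.Gamma)
      (∫ t in Ioi (0:ℝ), t ^ (x - 1) * (Real.log t ^ 2 * Real.exp (-t))) x := by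
  have h := (mellin_f1_hasDeriv hx).2
  have h2 := h.real_of_complex
  rw [mellin_f2_eq, Complex.ofReal_re] at h2
  refine h2.congr_of_eventuallyEq ?_
  filter_upwards [Ioi_mem_nhds hx] with y hy
  rw [(hasDerivAt_Gamma_real hy).deriv, ← Complex.ofReal_re
    (∫ t in Ioi (0:ℝ), t ^ (y - 1) * (Real.log t * Real.exp (-t))), ← mellin_f1_eq]


lemma integrable0 {a : ℝ} (ha : -1 < a) :
    IntegrableOn (fun t : ℝ => t ^ a * Real.exp (-t)) (Ioi (0:ℝ)) := by
  refine (Real.GammaIntegral_convergent (by linarith : (0:ℝ) < a + 1)).congr_fun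
    (fun t _ => ?_) measurableSet_Ioi
  rw [add_sub_cancel_right, mul_comm]

lemma integrable1 {a : ℝ} (ha : -1 < a) :
    IntegrableOn (fun t : ℝ => t ^ a * (Real.log t * Real.exp (-t))) (Ioi (0:ℝ)) := by
  have h : IntegrableOn (fun t : ℝ => ((t:ℂ) ^ (((a+1 : ℝ):ℂ) - 1) • f1 t).re)
      (Ioi (0:ℝ)) := (mellin_f1 (x := a + 1) (by linarith)).re
  refine h.congr_fun (fun t ht => ?_) measurableSet_Ioi
  have : ((t:ℂ) ^ (((a+1 : ℝ):ℂ) - 1) • f1 t)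
      = ((t ^ a * (Real.log t * Real.exp (-t)) : ℝ) : ℂ) := by
    rw [f1_eq, smul_eq_mul, show (((a:ℝ)+1 : ℝ):ℂ) - 1 = ((a : ℝ) : ℂ) by push_cast; ring,
      ← Complex.ofReal_cpow (le_of_lt ht)]
    simp only []
    norm_cast
  beta_reduce
  rw [this, Complex.ofReal_re]

lemma integrable2 {a : ℝ} (ha : -1 < a) :
    IntegrableOn (fun t : ℝ => t ^ a * (Real.log t ^ 2 * Real.exp (-t))) (Ioi (0:ℝ)) := by
  have h : IntegrableOn (fun t : ℝ => ((t:ℂ) ^ (((a+1 : ℝ):ℂ) - 1) • f2 t).re)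
      (Ioi (0:ℝ)) := ((mellin_f1_hasDeriv (x := a + 1) (by linarith)).1).re
  refine h.congr_fun (fun t ht => ?_) measurableSet_Ioi
  have : ((t:ℂ) ^ (((a+1 : ℝ):ℂ) - 1) • f2 t)
      = ((t ^ a * (Real.log t ^ 2 * Real.exp (-t)) : ℝ) : ℂ) := by
    rw [f2_eq, smul_eq_mul, show (((a:ℝ)+1 : ℝ):ℂ) - 1 = ((a : ℝ) : ℂ) by push_cast; ring,
      ← Complex.ofReal_cpow (le_of_lt ht)]
    simp only []
    norm_cast
  beta_reduce
  rw [this, Complex.ofReal_re]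

lemma I0val {a : ℝ} (ha : -1 < a) :
    (∫ t in Ioi (0:ℝ), t ^ a * Real.exp (-t)) = Real.Gamma (1 + a) := by
  rw [Real.Gamma_eq_integral (by linarith : (0:ℝ) < 1 + a)]
  exact setIntegral_congr_fun measurableSet_Ioi fun t _ => by
    rw [add_sub_cancel_left, mul_comm]

lemma digamma_pos {z : ℝ} (hz : 0 < z) :
    digamma z = deriv Real.Gamma z / Real.Gamma z := by
  have hd : HasDerivAt Real.Gamma (deriv Real.Gamma z) z :=
    (hasDerivAt_Gamma_real hz).differentiableAt.hasDerivAt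
  exact (hd.log (Real.Gamma_pos_of_pos hz).ne').deriv

lemma deriv_Gamma_eq {z : ℝ} (hz : 0 < z) :
    deriv Real.Gamma z = Real.Gamma z * digamma z := by
  rw [digamma_pos hz, mul_div_cancel₀ _ (Real.Gamma_pos_of_pos hz).ne']

lemma I1val {a : ℝ} (ha : -1 < a) :
    (∫ t in Ioi (0:ℝ), t ^ a * (Real.log t * Real.exp (-t)))
      = Real.Gamma (1 + a) * digamma (1 + a) := by
  have hz : (0:ℝ) < 1 + a := by linarith
  rw [← deriv_Gamma_eq hz, (hasDerivAt_Gamma_real hz).deriv]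
  exact setIntegral_congr_fun measurableSet_Ioi fun t _ => by rw [add_sub_cancel_left]

lemma deriv2_Gamma_eq {z : ℝ} (hz : 0 < z) :
    deriv (deriv Real.Gamma) z = Real.Gamma z * (digamma z ^ 2 + trigamma z) := by
  have hG := Real.Gamma_pos_of_pos hz
  have hd : HasDerivAt Real.Gamma (deriv Real.Gamma z) z :=
    (hasDerivAt_Gamma_real hz).differentiableAt.hasDerivAt
  have hd2 : HasDerivAt (deriv Real.Gamma) (deriv (deriv Real.Gamma) z) z :=
    (hasDerivAt_deriv_Gamma_real hz).differentiableAt.hasDerivAt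
  have hdiv : HasDerivAt (fun y => deriv Real.Gamma y / Real.Gamma y)
      ((deriv (deriv Real.Gamma) z * Real.Gamma z
        - deriv Real.Gamma z * deriv Real.Gamma z) / Real.Gamma z ^ 2) z :=
    hd2.div hd hG.ne'
  have hdig : HasDerivAt digamma
      ((deriv (deriv Real.Gamma) z * Real.Gamma z
        - deriv Real.Gamma z * deriv Real.Gamma z) / Real.Gamma z ^ 2) z := by
    refine hdiv.congr_of_eventuallyEq ?_
    filter_upwards [Ioi_mem_nhds hz] with y hy
    exact digamma_pos hy
  have ht : trigamma z = (deriv (deriv Real.Gamma) z * Real.Gamma z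
      - deriv Real.Gamma z * deriv Real.Gamma z) / Real.Gamma z ^ 2 := hdig.deriv
  rw [ht, digamma_pos hz]
  field_simp
  ring

lemma I2val {a : ℝ} (ha : -1 < a) :
    (∫ t in Ioi (0:ℝ), t ^ a * (Real.log t ^ 2 * Real.exp (-t)))
      = Real.Gamma (1 + a) * (digamma (1 + a) ^ 2 + trigamma (1 + a)) := by
  have hz : (0:ℝ) < 1 + a := by linarith
  rw [← deriv2_Gamma_eq hz, (hasDerivAt_deriv_Gamma_real hz).deriv]
  exact setIntegral_congr_fun measurableSet_Ioi fun t _ => by rw [add_sub_cancel_left]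

end WeibullAux

/-- Third main tool: `E[X^s log²(X) f^{r-1}(X;α,β)]`. -/
theorem weibullPDF_third_main_tool (α β s r : ℝ) (hα : 0 < α) (hβ : 0 < β) (hr : 0 < r)
    (hζ : s + (r - 1) * (α - 1) > -α) :
    (∫ x in Set.Ioi (0 : ℝ), x ^ s * (Real.log x) ^ 2 * (weibullPDF α β x) ^ r) =
      2 * β ^ (s - r + 1) * α ^ (r - 2) / r ^ (1 + (s + (r - 1) * (α - 1)) / α) *
        Real.Gamma (1 + (s + (r - 1) * (α - 1)) / α) *
        Real.log (β / r ^ (1 / α)) * digamma (1 + (s + (r - 1) * (α - 1)) / α) +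
      β ^ (s - r + 1) * α ^ (r - 1) / r ^ (1 + (s + (r - 1) * (α - 1)) / α) *
        Real.Gamma (1 + (s + (r - 1) * (α - 1)) / α) *
        ((Real.log (β / r ^ (1 / α))) ^ 2 +
          (1 / α ^ 2) * ((digamma (1 + (s + (r - 1) * (α - 1)) / α)) ^ 2 +
            trigamma (1 + (s + (r - 1) * (α - 1)) / α))) := by
  have hα' : α ≠ 0 := hα.ne'
  set ζ := s + (r - 1) * (α - 1) with hζdef
  set a := ζ / α with hadef
  have haα : α * a = ζ := by rw [hadef]; field_simp
  have ha : -1 < a := by rw [hadef, lt_div_iff₀ hα]; linarith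
  set L := Real.log (β / r ^ (1 / α)) with hLdef
  set φ := fun w : ℝ => w ^ a * ((L + Real.log w / α) ^ 2 * Real.exp (-w)) with hφdef
  have key : (∫ x in Set.Ioi (0:ℝ), x ^ s * Real.log x ^ 2 * weibullPDF α β x ^ r)
      = (α ^ (r - 1) * β ^ (s - r + 1) * r ^ (-(1 + a))) * ∫ w in Set.Ioi (0:ℝ), φ w := by
    have S1 : (∫ v in Set.Ioi (0:ℝ), φ (r * v)) = r⁻¹ * ∫ w in Set.Ioi (0:ℝ), φ w := by
      have h := MeasureTheory.integral_comp_mul_left_Ioi φ 0 hr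
      rw [mul_zero] at h
      simpa using h
    have S2 : (∫ u in Set.Ioi (0:ℝ), (α * u ^ (α - 1)) * φ (r * u ^ α))
        = ∫ v in Set.Ioi (0:ℝ), φ (r * v) := by
      have h := MeasureTheory.integral_comp_rpow_Ioi_of_pos (g := fun v => φ (r * v)) hα
      simpa using h
    have S3 : (∫ x in Set.Ioi (0:ℝ), (α * (β⁻¹ * x) ^ (α - 1)) * φ (r * (β⁻¹ * x) ^ α))
        = β * ∫ u in Set.Ioi (0:ℝ), (α * u ^ (α - 1)) * φ (r * u ^ α) := by
      have h := MeasureTheory.integral_comp_mul_left_Ioi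
        (fun u => (α * u ^ (α - 1)) * φ (r * u ^ α)) 0 (inv_pos.mpr hβ)
      rw [mul_zero] at h
      simpa using h
    have hpoint : ∀ x ∈ Set.Ioi (0:ℝ),
        x ^ s * Real.log x ^ 2 * weibullPDF α β x ^ r
          = (α ^ (r - 1) * β ^ (s - r + 1) * r ^ (-(1 + a)) * r * β⁻¹)
              * ((α * (β⁻¹ * x) ^ (α - 1)) * φ (r * (β⁻¹ * x) ^ α)) := by
      intro x hx
      rw [Set.mem_Ioi] at hx
      have hT : 0 < x / β := div_pos hx hβ
      have hE : (0:ℝ) < (x / β) ^ α := Real.rpow_pos_of_pos hT α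
      rw [show β⁻¹ * x = x / β by field_simp]
      have hlog : L + Real.log (r * (x / β) ^ α) / α = Real.log x := by
        rw [hLdef, Real.log_div hβ.ne' (Real.rpow_pos_of_pos hr _).ne',
          Real.log_rpow hr, Real.log_mul hr.ne' hE.ne', Real.log_rpow hT,
          Real.log_div hx.ne' hβ.ne']
        field_simp
        ring
      have hφv : φ (r * (x / β) ^ α)
          = r ^ a * (x / β) ^ ζ * (Real.log x ^ 2 * Real.exp (-((x / β) ^ α * r))) := by
        simp only [hφdef]
        rw [hlog, Real.mul_rpow hr.le hE.le, ← Real.rpow_mul hT.le, haα,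
          show -(r * (x / β) ^ α) = -((x / β) ^ α * r) by ring]
      have hw : weibullPDF α β x ^ r
          = α ^ r / β ^ r * (x / β) ^ ((α - 1) * r) * Real.exp (-((x / β) ^ α * r)) := by
        rw [weibullPDF, Real.mul_rpow (by positivity) (Real.exp_pos _).le,
          Real.mul_rpow (by positivity) (by positivity),
          Real.div_rpow hα.le hβ.le, ← Real.exp_mul, Real.rpow_mul hT.le, neg_mul]
      have hxs : x ^ s = β ^ s * (x / β) ^ s := by
        rw [← Real.mul_rpow hβ.le hT.le]
        congr 1
        field_simp
      have hTζ : (x / β) ^ ζ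
          = (x / β) ^ s * (x / β) ^ ((α - 1) * r) / (x / β) ^ (α - 1) := by
        rw [eq_div_iff (Real.rpow_pos_of_pos hT _).ne', ← Real.rpow_add hT,
          ← Real.rpow_add hT]
        congr 1
        rw [hζdef]; ring
      have hαr : α ^ (r - 1) = α ^ r / α := by
        rw [eq_div_iff hα', ← Real.rpow_add_one hα']
        congr 1; ring
      have hβr : β ^ (s - r + 1) = β ^ s / β ^ r * β := by
        rw [show s - r + 1 = s + -r + 1 by ring, Real.rpow_add hβ, Real.rpow_add hβ,
          Real.rpow_one, Real.rpow_neg hβ.le, div_eq_mul_inv]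
      have hrr : r ^ (-(1 + a)) = (r * r ^ a)⁻¹ := by
        rw [Real.rpow_neg hr.le, Real.rpow_add hr, Real.rpow_one]
      have hT1 : (x / β) ^ (α - 1) ≠ 0 := (Real.rpow_pos_of_pos hT _).ne'
      have hβr' : (β:ℝ) ^ r ≠ 0 := (Real.rpow_pos_of_pos hβ _).ne'
      have hra : (r:ℝ) ^ a ≠ 0 := (Real.rpow_pos_of_pos hr _).ne'
      rw [hφv, hw, hxs, hTζ, hαr, hβr, hrr]
      field_simp
    rw [setIntegral_congr_fun measurableSet_Ioi hpoint, MeasureTheory.integral_const_mul,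
      S3, S2, S1]
    field_simp
  have hexp : (∫ w in Set.Ioi (0:ℝ), φ w)
      = L ^ 2 * Real.Gamma (1 + a)
        + 2 * L / α * (Real.Gamma (1 + a) * digamma (1 + a))
        + 1 / α ^ 2 * (Real.Gamma (1 + a) * (digamma (1 + a) ^ 2 + trigamma (1 + a))) := by
    have hfe : φ = fun w : ℝ =>
        L ^ 2 * (w ^ a * Real.exp (-w))
          + 2 * L / α * (w ^ a * (Real.log w * Real.exp (-w)))
          + 1 / α ^ 2 * (w ^ a * (Real.log w ^ 2 * Real.exp (-w))) := by
      funext w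
      simp only [hφdef]
      field_simp
      ring
    rw [hfe, MeasureTheory.integral_add, MeasureTheory.integral_add,
      MeasureTheory.integral_const_mul, MeasureTheory.integral_const_mul,
      MeasureTheory.integral_const_mul, WeibullAux.I0val ha, WeibullAux.I1val ha,
      WeibullAux.I2val ha]
    · exact (WeibullAux.integrable0 ha).const_mul _
    · exact (WeibullAux.integrable1 ha).const_mul _
    · exact ((WeibullAux.integrable0 ha).const_mul _).add
        ((WeibullAux.integrable1 ha).const_mul _)
    · exact (WeibullAux.integrable2 ha).const_mul _
  rw [key, hexp]
  have hr1 : r ^ (-(1 + a)) = (r ^ (1 + a))⁻¹ := Real.rpow_neg hr.le _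
  have hα2 : α ^ (r - 2) = α ^ (r - 1) / α := by
    rw [eq_div_iff hα', ← Real.rpow_add_one hα']
    congr 1; ring
  have hrpos : (0:ℝ) < r ^ (1 + a) := Real.rpow_pos_of_pos hr _
  rw [hr1, hα2]
  field_simp
  ring
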